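/- Let a, b ∈ ℂ with positive real parts and x ∈ ℝ. Then there exists a constant σ ≥ 0 independent of n such that |p_n(x; a, b, ā, b̄)| ≤ n! (1+n)^σ for all n ∈ ℕ₀. In fact one may take σ = 2(|a+ix| + |b+ix|) + 1. -/

import Mathlib

open Complex Finset

/-- The Pochhammer symbol (rising factorial) `(z)_n = z(z+1)⋯(z+n-1)`. -/
noncomputable def poch (z : ℂ) (n : ℕ) : ℂ := ∏ i ∈ Finset.range n, (z + i)

/-- The continuous Hahn polynomial `p_n(x; a, b, ā, b̄)` via its terminating
`₃F₂` representation. -/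
noncomputable def cHahn (n : ℕ) (x : ℝ) (a b : ℂ) : ℂ :=
  Complex.I ^ n * poch ((2 * a.re : ℝ) : ℂ) n * poch (a + (starRingEnd ℂ) b) n /
      (n.factorial : ℂ) *
    ∑ j ∈ Finset.range (n + 1),
      poch (-(n : ℂ)) j * poch ((n : ℂ) + 2 * a.re + 2 * b.re - 1) j *
          poch (a + Complex.I * x) j /
        (poch ((2 * a.re : ℝ) : ℂ) j * poch (a + (starRingEnd ℂ) b) j * j.factorial)

lemma poch_zero (z : ℂ) : poch z 0 = 1 := by simp [poch]

lemma poch_succ (z : ℂ) (n : ℕ) : poch z (n+1) = poch z n * (z + n) := by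
  simp [poch, Finset.prod_range_succ]

lemma poch_succ_left (z : ℂ) (n : ℕ) : poch z (n+1) = z * poch (z+1) n := by
  rw [poch, Finset.prod_range_succ']
  rw [show ((0:ℕ):ℂ) = 0 by simp, add_zero, mul_comm]
  congr 1
  apply Finset.prod_congr rfl
  intro i _
  push_cast [poch]; ring

lemma poch_add (z : ℂ) (m k : ℕ) : poch z (m+k) = poch z m * poch (z + m) k := by
  rw [poch, Finset.prod_range_add]
  congr 1
  apply Finset.prod_congr rfl
  intro i _
  push_cast; ring

lemma poch_neg (z : ℂ) (m : ℕ) : poch (-z) m = (-1)^m * poch (z - m + 1) m := by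
  rw [poch, poch, ← Finset.prod_range_reflect]
  rw [show ((-1:ℂ))^m = ∏ _i ∈ Finset.range m, (-1:ℂ) by simp, ← Finset.prod_mul_distrib]
  apply Finset.prod_congr rfl
  intro i hi
  simp only [Finset.mem_range] at hi
  have : (((m - 1 - i : ℕ)) : ℂ) = (m:ℂ) - 1 - i := by
    have : m - 1 - i = m - (1 + i) := by omega
    rw [this]
    push_cast [Nat.cast_sub (by omega : 1 + i ≤ m)]
    ring
  rw [this]; ring

lemma vandermonde (n : ℕ) (x y : ℂ) :
    poch (x+y) n = ∑ k ∈ range (n+1), (n.choose k : ℂ) * poch x k * poch y (n-k) := by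
  induction n with
  | zero => simp [poch_zero]
  | succ n ih =>
    rw [poch_succ, ih, Finset.sum_mul]
    have key : ∀ k ∈ range (n+1), (n.choose k : ℂ) * poch x k * poch y (n-k) * (x+y+n)
        = (n.choose k : ℂ) * poch x (k+1) * poch y (n-k)
        + (n.choose k : ℂ) * poch x k * poch y (n-k+1) := by
      intro k hk
      simp only [mem_range] at hk
      have hk' : k ≤ n := by omega
      have h1 : (x+y+(n:ℂ)) = (x + k) + (y + ((n-k : ℕ):ℂ)) := by
        rw [Nat.cast_sub hk']; ring
      rw [poch_succ, poch_succ, h1]; ring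
    rw [Finset.sum_congr rfl key, Finset.sum_add_distrib]
    have e1 : ∑ k ∈ range (n+1), (n.choose k : ℂ) * poch x k * poch y (n-k+1)
        = ∑ k ∈ range (n+2), (n.choose k : ℂ) * poch x k * poch y (n+1-k) := by
      rw [Finset.sum_range_succ (n := n+1)]
      have : (n.choose (n+1) : ℂ) = 0 := by simp
      rw [this]
      simp only [zero_mul, add_zero, mul_zero]
      apply Finset.sum_congr rfl
      intro k hk
      simp only [mem_range] at hk
      have : n - k + 1 = n + 1 - k := by omega
      rw [this]
    rw [e1, Finset.sum_range_succ' (f := fun k => (n.choose k : ℂ) * poch x k * poch y (n+1-k)),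
        Finset.sum_range_succ' (f := fun k => ((n+1).choose k : ℂ) * poch x k * poch y (n+1-k))]
    simp only [Nat.succ_sub_succ, Nat.choose_succ_succ, Nat.cast_add, Nat.choose_zero_right,
      Nat.cast_one]
    rw [← add_assoc, ← Finset.sum_add_distrib]
    congr 1
    apply Finset.sum_congr rfl
    intro k _
    push_cast
    ring

lemma step2 (m : ℕ) : ∀ (n : ℕ), m ≤ n → ∀ (A c : ℂ),
    ∑ j ∈ range (m+1), (-1:ℂ)^j * (m.choose j : ℂ) * poch c j * poch (A + j) (n - j)
    = poch (A - c) m * poch (A + m) (n - m) := by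
  induction m with
  | zero => intro n _ A c; simp [poch_zero]
  | succ m ih =>
    intro n hmn A c
    have hm' : m ≤ n - 1 := by omega
    rw [Finset.sum_range_succ'
      (f := fun j => (-1:ℂ)^j * ((m+1).choose j : ℂ) * poch c j * poch (A + j) (n - j))]
    have key : ∀ j ∈ range (m+1),
        (-1:ℂ)^(j+1) * (((m+1).choose (j+1) : ℕ) : ℂ) * poch c (j+1) * poch (A + ↑(j+1)) (n - (j+1))
        = (-1:ℂ)^(j+1) * (m.choose (j+1) : ℂ) * poch c (j+1) * poch (A + ↑(j+1)) (n - (j+1))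
          + (-1:ℂ)^j * (-c) * (m.choose j : ℂ) * poch (c+1) j * poch ((A+1) + j) ((n-1) - j) := by
      intro j hj
      have hc : poch c (j+1) = c * poch (c+1) j := poch_succ_left c j
      have hn : n - (j+1) = (n-1) - j := by omega
      have ha : (A + ↑(j+1)) = ((A+1) + (j:ℂ)) := by push_cast; ring
      rw [Nat.choose_succ_succ, hc, hn, ha]
      push_cast
      ring
    rw [Finset.sum_congr rfl key, Finset.sum_add_distrib]
    have h2 : ∑ j ∈ range (m+1),
        (-1:ℂ)^j * (-c) * (m.choose j : ℂ) * poch (c+1) j * poch ((A+1) + j) ((n-1) - j)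
        = (-c) * (poch ((A+1) - (c+1)) m * poch ((A+1) + m) ((n-1) - m)) := by
      rw [← ih (n-1) hm' (A+1) (c+1), Finset.mul_sum]
      exact Finset.sum_congr rfl fun j _ => by ring
    have h1 : ∑ j ∈ range (m+1),
        (-1:ℂ)^(j+1) * (m.choose (j+1) : ℂ) * poch c (j+1) * poch (A + ↑(j+1)) (n - (j+1))
        + (-1:ℂ)^0 * (((m+1).choose 0 : ℕ):ℂ) * poch c 0 * poch (A + (0:ℕ)) (n - 0)
        = poch (A - c) m * poch (A + m) (n - m) := by
      rw [show ((-1:ℂ)^0 * (((m+1).choose 0 : ℕ):ℂ) * poch c 0 * poch (A + (0:ℕ)) (n - 0))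
          = (-1:ℂ)^0 * ((m.choose 0:ℕ):ℂ) * poch c 0 * poch (A + (0:ℕ)) (n - 0) by simp,
        ← Finset.sum_range_succ'
          (f := fun j => (-1:ℂ)^j * (m.choose j : ℂ) * poch c j * poch (A + j) (n - j)),
        Finset.sum_range_succ]
      rw [ih n (by omega) A c]
      simp [Nat.choose_succ_self]
    rw [add_right_comm, h1, h2]
    have e1 : poch (A - c) (m+1) = poch (A-c) m * (A - c + m) := poch_succ _ _
    have e2 : poch (A + m) (n - m) = (A + m) * poch (A + m + 1) (n - m - 1) := by
      rw [show n - m = (n - m - 1) + 1 by omega, poch_succ_left]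
      congr 1
    have e3 : poch (A + ↑(m+1)) (n - (m+1)) = poch (A + 1 + m) (n - 1 - m) := by
      rw [show (A + ((m:ℕ)+1:ℕ)) = (A + 1 + (m:ℂ)) by push_cast; ring,
        show n - (m+1) = n - 1 - m by omega]
    have e4 : poch (A + 1 - (c+1)) m = poch (A - c) m := by
      rw [show A + 1 - (c+1) = A - c by ring]
    rw [e1, e2, e3, e4, show n - m - 1 = n - 1 - m by omega]
    ring

lemma tri (n : ℕ) (f : ℕ → ℕ → ℂ) :
    ∑ j ∈ range (n+1), ∑ k ∈ range (n+1-j), f j k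
    = ∑ m ∈ range (n+1), ∑ j ∈ range (m+1), f j (m-j) := by
  rw [Finset.sum_sigma', Finset.sum_sigma']
  refine sum_nbij' (fun x => ⟨x.1 + x.2, x.1⟩) (fun x => ⟨x.2, x.1 - x.2⟩) ?_ ?_ ?_ ?_ ?_
  · simp only [Finset.mem_sigma, Finset.mem_range, Sigma.forall]
    intro a b hab; omega
  · simp only [Finset.mem_sigma, Finset.mem_range, Sigma.forall]
    intro a b hab; omega
  · simp only [Finset.mem_sigma, Finset.mem_range, Sigma.forall]
    intro a b hab
    simp only [Sigma.mk.inj_iff]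
    exact ⟨trivial, heq_of_eq (by omega : a + b - a = b)⟩
  · simp only [Finset.mem_sigma, Finset.mem_range, Sigma.forall]
    intro a b hab
    simp only [Sigma.mk.inj_iff]
    exact ⟨by omega, HEq.rfl⟩
  · simp only [Finset.mem_sigma, Finset.mem_range, Sigma.forall]
    intro a b hab
    congr 1
    omega

lemma lhs_eq_mid (n : ℕ) (u w A B : ℂ) :
    ∑ j ∈ range (n+1), (-1:ℂ)^j * (n.choose j:ℂ) * poch ((n:ℂ) + A + B - 1) j * poch u j *
        poch (A+j) (n-j) * poch (u - w + B + j) (n-j)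
    = ∑ m ∈ range (n+1), (-1:ℂ)^m * (n.choose m:ℂ) * poch u m * poch (A+m) (n-m) *
        poch (B + ((n-m:ℕ):ℂ)) m * poch (B-w) (n-m) := by
  set c0 : ℂ := (n:ℂ) + A + B - 1 with hc0
  have expand : ∀ j ∈ range (n+1),
      (-1:ℂ)^j * (n.choose j:ℂ) * poch c0 j * poch u j * poch (A+j) (n-j) *
        poch (u - w + B + j) (n-j)
      = ∑ k ∈ range (n+1-j), (-1:ℂ)^j * (n.choose j:ℂ) * ((n-j).choose k : ℂ) * poch c0 j *
          poch u (j+k) * poch (A+j) (n-j) * poch (B-w) (n-j-k) := by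
    intro j hj
    simp only [mem_range] at hj
    rw [show u - w + B + (j:ℂ) = (u + j) + (B - w) by ring, vandermonde (n-j) (u + (j:ℂ)) (B - w),
      show n - j + 1 = n + 1 - j by omega, Finset.mul_sum]
    apply Finset.sum_congr rfl
    intro k hk
    rw [poch_add u j k]
    ring
  rw [Finset.sum_congr rfl expand, tri]
  apply Finset.sum_congr rfl
  intro m hm
  simp only [mem_range] at hm
  have hm' : m ≤ n := by omega
  have inner : ∀ j ∈ range (m+1),
      (-1:ℂ)^j * (n.choose j:ℂ) * ((n-j).choose (m-j) : ℂ) * poch c0 j *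
          poch u (j+(m-j)) * poch (A+j) (n-j) * poch (B-w) (n-j-(m-j))
      = (n.choose m : ℂ) * poch u m * poch (B-w) (n-m) *
          ((-1:ℂ)^j * (m.choose j : ℂ) * poch c0 j * poch (A+j) (n-j)) := by
    intro j hj
    simp only [mem_range] at hj
    have h1 : j + (m-j) = m := by omega
    have h2 : n - j - (m-j) = n - m := by omega
    have h3 : (n.choose j) * ((n-j).choose (m-j)) = n.choose m * m.choose j :=
      (Nat.choose_mul (n := n) (k := m) (s := j) (by omega)).symm
    rw [h1, h2]
    have h3' : ((n.choose j : ℕ):ℂ) * (((n-j).choose (m-j) : ℕ):ℂ)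
        = ((n.choose m : ℕ):ℂ) * ((m.choose j : ℕ):ℂ) := by
      exact_mod_cast h3
    calc (-1:ℂ)^j * (n.choose j:ℂ) * ((n-j).choose (m-j) : ℂ) * poch c0 j *
          poch u m * poch (A+j) (n-j) * poch (B-w) (n-m)
        = ((n.choose j : ℂ) * ((n-j).choose (m-j):ℂ)) * ((-1:ℂ)^j * poch c0 j *
          poch u m * poch (A+j) (n-j) * poch (B-w) (n-m)) := by ring
      _ = ((n.choose m : ℂ) * ((m.choose j):ℂ)) * ((-1:ℂ)^j * poch c0 j *
          poch u m * poch (A+j) (n-j) * poch (B-w) (n-m)) := by rw [h3']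
      _ = (n.choose m : ℂ) * poch u m * poch (B-w) (n-m) *
          ((-1:ℂ)^j * (m.choose j : ℂ) * poch c0 j * poch (A+j) (n-j)) := by ring
  rw [Finset.sum_congr rfl inner, ← Finset.mul_sum, step2 m n hm' A c0]
  have hrefl : poch (A - c0) m = (-1:ℂ)^m * poch (B + ((n-m:ℕ):ℂ)) m := by
    rw [show A - c0 = -((B:ℂ) + n - 1) by rw [hc0]; ring, poch_neg,
      show (B:ℂ) + n - 1 - m + 1 = B + ((n:ℂ) - m) by ring,
      show ((n:ℂ) - m) = ((n-m:ℕ):ℂ) by push_cast [Nat.cast_sub hm']; ring]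
  rw [hrefl]
  ring

lemma rhs_eq_mid (n : ℕ) (u w A B : ℂ) :
    ∑ k ∈ range (n+1), (-1:ℂ)^k * (n.choose k:ℂ) * poch u k * poch w k *
        poch (A-u) (n-k) * poch (B-w) (n-k)
    = ∑ m ∈ range (n+1), (-1:ℂ)^m * (n.choose m:ℂ) * poch u m * poch (A+m) (n-m) *
        poch (B + ((n-m:ℕ):ℂ)) m * poch (B-w) (n-m) := by
  have expand : ∀ k ∈ range (n+1),
      (-1:ℂ)^k * (n.choose k:ℂ) * poch u k * poch w k * poch (A-u) (n-k) * poch (B-w) (n-k)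
      = ∑ i ∈ range (n+1-k), (-1:ℂ)^(k+i) * (n.choose k:ℂ) * ((n-k).choose i : ℂ) *
          poch u (k+i) * poch w k * poch (A + ((k+i:ℕ):ℂ)) (n-(k+i)) * poch (B-w) (n-k) := by
    intro k hk
    simp only [mem_range] at hk
    have hkn : k ≤ n := by omega
    have h1 : poch (A-u) (n-k)
        = (-1:ℂ)^(n-k) * ∑ i ∈ range (n+1-k), (((n-k).choose i : ℕ) : ℂ) *
            poch (u + (k:ℂ)) i * poch (1 - A - (n:ℂ)) (n-k-i) := by
      rw [show A - u = -(u - A) by ring, poch_neg (u-A) (n-k),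
        show u - A - ((n-k:ℕ):ℂ) + 1 = (u + (k:ℂ)) + (1 - A - (n:ℂ)) by
          push_cast [Nat.cast_sub hkn]; ring,
        vandermonde (n-k) (u + (k:ℂ)) (1 - A - (n:ℂ)),
        show n - k + 1 = n + 1 - k by omega]
    rw [h1]
    simp only [Finset.mul_sum, Finset.sum_mul]
    apply Finset.sum_congr rfl
    intro i hi
    simp only [mem_range] at hi
    have hik : i ≤ n - k := by omega
    have e5 : poch (1 - A - (n:ℂ)) (n-k-i)
        = (-1:ℂ)^(n-k-i) * poch (A + ((k+i:ℕ):ℂ)) (n-k-i) := by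
      rw [show (1 : ℂ) - A - (n:ℂ) = -(A + (n:ℂ) - 1) by ring, poch_neg (A + (n:ℂ) - 1) (n-k-i),
        show A + (n:ℂ) - 1 - ((n-k-i:ℕ):ℂ) + 1 = A + ((k+i:ℕ):ℂ) by
          push_cast [Nat.cast_sub (by omega : n - k - i ≤ n), Nat.cast_sub hkn, Nat.cast_sub hik]; ring]
    have e6 : poch u (k+i) = poch u k * poch (u + (k:ℂ)) i := poch_add u k i
    have e7 : n - (k+i) = n - k - i := by omega
    have he' : (-1:ℂ)^(n-k) = (-1:ℂ)^i * (-1:ℂ)^(n-k-i) := by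
      rw [← pow_add, show i + (n-k-i) = n-k by omega]
    rw [e5, e7, e6, he', pow_add]
    ring_nf
    rw [show ((-1:ℂ))^((n-k-i)*2) = 1 by rw [mul_comm, pow_mul]; norm_num, mul_one]
  rw [Finset.sum_congr rfl expand, tri]
  apply Finset.sum_congr rfl
  intro m hm
  simp only [mem_range] at hm
  have hm' : m ≤ n := by omega
  have inner : ∀ k ∈ range (m+1),
      (-1:ℂ)^(k+(m-k)) * (n.choose k:ℂ) * ((n-k).choose (m-k) : ℂ) *
          poch u (k+(m-k)) * poch w k * poch (A + ((k+(m-k):ℕ):ℂ)) (n-(k+(m-k))) *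
          poch (B-w) (n-k)
      = ((-1:ℂ)^m * (n.choose m:ℂ) * poch u m * poch (A+(m:ℂ)) (n-m) * poch (B-w) (n-m)) *
          ((m.choose k : ℂ) * poch w k * poch ((B-w) + ((n-m:ℕ):ℂ)) (m-k)) := by
    intro k hk
    simp only [mem_range] at hk
    have h1 : k + (m-k) = m := by omega
    have h2 : poch (B-w) (n-k) = poch (B-w) (n-m) * poch ((B-w) + ((n-m:ℕ):ℂ)) (m-k) := by
      rw [← poch_add, show (n-m) + (m-k) = n - k by omega]
    have h3 : ((n.choose k : ℕ):ℂ) * (((n-k).choose (m-k) : ℕ):ℂ)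
        = ((n.choose m : ℕ):ℂ) * ((m.choose k : ℕ):ℂ) := by
      exact_mod_cast (Nat.choose_mul (n := n) (k := m) (s := k) (by omega)).symm
    rw [h1, h2]
    calc (-1:ℂ)^m * (n.choose k:ℂ) * ((n-k).choose (m-k) : ℂ) * poch u m * poch w k *
          poch (A + (m:ℂ)) (n-m) * (poch (B-w) (n-m) * poch ((B-w) + ((n-m:ℕ):ℂ)) (m-k))
        = ((n.choose k:ℂ) * ((n-k).choose (m-k) : ℂ)) * ((-1:ℂ)^m * poch u m * poch w k *
          poch (A + (m:ℂ)) (n-m) * poch (B-w) (n-m) * poch ((B-w) + ((n-m:ℕ):ℂ)) (m-k)) := by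
          ring
      _ = ((n.choose m:ℂ) * ((m.choose k) : ℂ)) * ((-1:ℂ)^m * poch u m * poch w k *
          poch (A + (m:ℂ)) (n-m) * poch (B-w) (n-m) * poch ((B-w) + ((n-m:ℕ):ℂ)) (m-k)) := by
          rw [h3]
      _ = ((-1:ℂ)^m * (n.choose m:ℂ) * poch u m * poch (A+(m:ℂ)) (n-m) * poch (B-w) (n-m)) *
          ((m.choose k : ℂ) * poch w k * poch ((B-w) + ((n-m:ℕ):ℂ)) (m-k)) := by ring
  rw [Finset.sum_congr rfl inner, ← Finset.mul_sum,
    ← vandermonde m w ((B-w) + ((n-m:ℕ):ℂ)),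
    show w + ((B-w) + ((n-m:ℕ):ℂ)) = B + ((n-m:ℕ):ℂ) by ring]
  ring

lemma poch_ne_zero {z : ℂ} (hz : 0 < z.re) (m : ℕ) : poch z m ≠ 0 := by
  rw [poch]
  apply Finset.prod_ne_zero_iff.mpr
  intro i _
  have hre : 0 < (z + (i:ℂ)).re := by
    have h0 : (0:ℝ) ≤ (i:ℝ) := Nat.cast_nonneg i
    simp only [Complex.add_re, Complex.natCast_re]
    linarith
  intro h
  rw [h] at hre
  simp at hre

lemma poch_nat (m j : ℕ) :
    (m.factorial : ℂ) * poch ((m:ℂ)+1) j = ((m+j).factorial : ℂ) := by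
  induction j with
  | zero => simp [poch_zero]
  | succ j ih =>
    rw [poch_succ]
    calc (m.factorial : ℂ) * (poch ((m:ℂ)+1) j * ((m:ℂ)+1+j))
        = ((m.factorial : ℂ) * poch ((m:ℂ)+1) j) * ((m:ℂ)+1+j) := by ring
      _ = ((m+j).factorial : ℂ) * ((m:ℂ)+1+j) := by rw [ih]
      _ = ((m+(j+1)).factorial : ℂ) := by
          rw [show m+(j+1) = (m+j)+1 by omega, Nat.factorial_succ]
          push_cast
          ring

lemma cHahn_eq (n : ℕ) (x : ℝ) (a b : ℂ) (ha : 0 < a.re) (hb : 0 < b.re) :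
    cHahn n x a b = Complex.I^n / (n.factorial:ℂ) *
      ∑ k ∈ range (n+1), (-1:ℂ)^k * (n.choose k:ℂ) * poch (a+Complex.I*x) k *
        poch (b+Complex.I*x) k * poch (2*(a.re:ℂ) - (a+Complex.I*x)) (n-k) *
        poch (2*(b.re:ℂ) - (b+Complex.I*x)) (n-k) := by
  have hconj : a + (starRingEnd ℂ) b
      = (a+Complex.I*x) - (b+Complex.I*x) + 2*(b.re:ℂ) := by
    have h := Complex.add_conj b
    have h2 : (starRingEnd ℂ) b = 2*(b.re:ℂ) - b := by
      rw [eq_sub_iff_add_eq, add_comm ((starRingEnd ℂ) b) b, h]; push_cast; ring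
    rw [h2]; ring
  have hA : ((2 * a.re : ℝ) : ℂ) = 2*(a.re:ℂ) := by push_cast; ring
  simp only [cHahn]
  rw [hA, hconj]
  set u := a + Complex.I*(x:ℂ) with hu
  set w := b + Complex.I*(x:ℂ) with hw
  set A := 2*(a.re:ℂ) with hAd
  set B := 2*(b.re:ℂ) with hBd
  have h1 : Complex.I ^ n * poch A n * poch (u - w + B) n / (n.factorial : ℂ) *
      ∑ j ∈ Finset.range (n + 1),
        poch (-(n : ℂ)) j * poch ((n : ℂ) + A + B - 1) j * poch u j /
          (poch A j * poch (u - w + B) j * (j.factorial:ℂ))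
      = Complex.I^n / (n.factorial:ℂ) *
        ∑ j ∈ range (n+1), (-1:ℂ)^j * (n.choose j:ℂ) * poch ((n:ℂ) + A + B - 1) j * poch u j *
          poch (A+j) (n-j) * poch (u - w + B + j) (n-j) := by
    rw [Finset.mul_sum, Finset.mul_sum]
    apply Finset.sum_congr rfl
    intro j hj
    simp only [mem_range] at hj
    have hjn : j ≤ n := by omega
    set E := u - w + B with hEd
    have hAre : (0:ℝ) < A.re := by
      rw [hAd]
      simp only [Complex.mul_re, Complex.ofReal_re, Complex.ofReal_im]
      norm_num
      linarith
    have hEre : (0:ℝ) < E.re := by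
      rw [hEd, hu, hw, hBd]
      simp only [Complex.add_re, Complex.sub_re, Complex.mul_re, Complex.ofReal_re,
        Complex.ofReal_im, Complex.I_re, Complex.I_im, Complex.mul_im]
      norm_num
      linarith
    have hAj := poch_ne_zero hAre j
    have hEj := poch_ne_zero hEre j
    have hjf : ((j.factorial:ℕ):ℂ) ≠ 0 := Nat.cast_ne_zero.mpr (Nat.factorial_ne_zero j)
    have hnjf : (((n-j).factorial:ℕ):ℂ) ≠ 0 := Nat.cast_ne_zero.mpr (Nat.factorial_ne_zero _)
    have hnf : ((n.factorial:ℕ):ℂ) ≠ 0 := Nat.cast_ne_zero.mpr (Nat.factorial_ne_zero n)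
    have hAn : poch A n = poch A j * poch (A + (j:ℂ)) (n-j) := by
      rw [← poch_add, show j + (n-j) = n by omega]
    have hEn : poch E n = poch E j * poch (E + (j:ℂ)) (n-j) := by
      rw [← poch_add, show j + (n-j) = n by omega]
    have hpm : poch (-(n : ℂ)) j = (-1:ℂ)^j * ((n.factorial:ℂ) / ((n-j).factorial:ℂ)) := by
      rw [poch_neg (n:ℂ) j,
        show (n:ℂ) - j + 1 = (((n-j:ℕ)):ℂ) + 1 by push_cast [Nat.cast_sub hjn]; ring]
      have h2 := poch_nat (n-j) j
      rw [show (n-j)+j = n by omega] at h2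
      congr 1
      rw [eq_div_iff hnjf]
      linear_combination h2
    have hcc : ((n.choose j:ℕ):ℂ) = (n.factorial:ℂ) / ((j.factorial:ℂ) * ((n-j).factorial:ℂ)) := by
      rw [eq_div_iff (mul_ne_zero hjf hnjf), ← mul_assoc]
      exact_mod_cast Nat.choose_mul_factorial_mul_factorial hjn
    clear_value u w A B E
    rw [hAn, hEn, hpm, hcc]
    field_simp [hAj, hEj, hjf, hnjf, hnf]
  rw [h1, lhs_eq_mid n u w A B, ← rhs_eq_mid n u w A B]

lemma prod_le_fact_rpow {c : ℝ} (hc : 0 ≤ c) (m : ℕ) :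
    ∏ i ∈ range m, (c + i) ≤ (m.factorial : ℝ) * ((1:ℝ)+m) ^ (c:ℝ) := by
  induction m with
  | zero => simp [Real.one_rpow]
  | succ m ih =>
    rw [Finset.prod_range_succ]
    have hm1 : (0:ℝ) < 1 + m := by positivity
    have hb : ((1:ℝ)+m) ^ (c:ℝ) ≤ ((1:ℝ)+(m+1)) ^ (c:ℝ) := by
      apply Real.rpow_le_rpow (by positivity) (by push_cast; linarith) hc
    have key : (c + m) * ((1:ℝ)+m) ^ (c:ℝ) ≤ ((m:ℝ)+1) * ((1:ℝ)+(m+1:ℕ)) ^ (c:ℝ) := by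
      have ht : (0:ℝ) < 1 + 1/((m:ℝ)+1) := by positivity
      have hsplit : ((1:ℝ)+(m+1:ℕ)) = (1+(m:ℝ)) * (1 + 1/((m:ℝ)+1)) := by
        push_cast
        field_simp
        ring
      rw [hsplit, Real.mul_rpow (by positivity) (by positivity)]
      rw [show (c + (m:ℝ)) * ((1:ℝ)+m) ^ (c:ℝ) = ((1:ℝ)+m) ^ (c:ℝ) * (c + m) by ring]
      have hfin : c + (m:ℝ) ≤ ((m:ℝ)+1) * ((1:ℝ) + 1/((m:ℝ)+1)) ^ (c:ℝ) := by
        rcases le_or_gt 1 c with h1 | h1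
        · have hber : 1 + c * (1/((m:ℝ)+1)) ≤ (1 + 1/((m:ℝ)+1)) ^ (c:ℝ) :=
            one_add_mul_self_le_rpow_one_add (by
              have : (0:ℝ) ≤ 1/((m:ℝ)+1) := by positivity
              linarith) h1
          have h2 : ((m:ℝ)+1) * (1 + c * (1/((m:ℝ)+1)))
              ≤ ((m:ℝ)+1) * (1 + 1/((m:ℝ)+1)) ^ (c:ℝ) :=
            mul_le_mul_of_nonneg_left hber (by positivity)
          have he : ((m:ℝ)+1) * (1 + c * (1/((m:ℝ)+1))) = (m:ℝ) + 1 + c := by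
            field_simp
          linarith
        · have hone : (1:ℝ) ≤ (1 + 1/((m:ℝ)+1)) ^ (c:ℝ) := by
            have h0 : (0:ℝ) < 1/((m:ℝ)+1) := by positivity
            calc (1:ℝ) = (1 + 1/((m:ℝ)+1)) ^ (0:ℝ) := (Real.rpow_zero _).symm
              _ ≤ _ := Real.rpow_le_rpow_of_exponent_le (by linarith) hc
          nlinarith [hone]
      calc ((1:ℝ)+m) ^ (c:ℝ) * (c + m)
          ≤ ((1:ℝ)+m) ^ (c:ℝ) * (((m:ℝ)+1) * ((1:ℝ)+1/((m:ℝ)+1)) ^ (c:ℝ)) :=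
            mul_le_mul_of_nonneg_left hfin (Real.rpow_nonneg (by positivity) _)
        _ = ((m:ℝ)+1) * (((1:ℝ)+m) ^ (c:ℝ) * ((1:ℝ)+1/((m:ℝ)+1)) ^ (c:ℝ)) := by ring
    calc (∏ i ∈ range m, (c + i)) * (c + m)
        ≤ ((m.factorial : ℝ) * ((1:ℝ)+m) ^ (c:ℝ)) * (c + m) := by
          apply mul_le_mul_of_nonneg_right ih (by positivity)
      _ = (m.factorial : ℝ) * ((c + m) * ((1:ℝ)+m) ^ (c:ℝ)) := by ring
      _ ≤ (m.factorial : ℝ) * (((m:ℝ)+1) * ((1:ℝ)+(m+1:ℕ)) ^ (c:ℝ)) := by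
          apply mul_le_mul_of_nonneg_left key (by positivity)
      _ = ((m+1).factorial : ℝ) * ((1:ℝ)+((m+1:ℕ):ℝ)) ^ (c:ℝ) := by
          rw [Nat.factorial_succ]
          push_cast
          ring

lemma norm_poch_le (v : ℂ) (m : ℕ) :
    ‖poch v m‖ ≤ (m.factorial : ℝ) * ((1:ℝ)+m) ^ (‖v‖) := by
  have h1 : ‖poch v m‖ ≤ ∏ i ∈ range m, (‖v‖ + i) := by
    rw [poch]
    refine le_trans (norm_prod_le _ _) ?_
    apply Finset.prod_le_prod (fun i _ => norm_nonneg _)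
    intro i _
    refine le_trans (norm_add_le _ _) ?_
    simp
  exact le_trans h1 (prod_le_fact_rpow (norm_nonneg v) m)


lemma norm_poch_le' (v : ℂ) {m n : ℕ} (h : m ≤ n) :
    ‖poch v m‖ ≤ (m.factorial : ℝ) * ((1:ℝ)+n) ^ (‖v‖) := by
  refine le_trans (norm_poch_le v m) ?_
  apply mul_le_mul_of_nonneg_left _ (by positivity)
  refine Real.rpow_le_rpow (by positivity) ?_ (norm_nonneg v)
  have h' : (m:ℝ) ≤ (n:ℝ) := Nat.cast_le.mpr h
  linarith

theorem cHahn_bound (a b : ℂ) (ha : 0 < a.re) (hb : 0 < b.re) (x : ℝ) :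
    ∃ σ ≥ (0 : ℝ), σ = 2 * (‖a + Complex.I * x‖ + ‖b + Complex.I * x‖) + 1 ∧
      ∀ n : ℕ, ‖cHahn n x a b‖ ≤ (n.factorial : ℝ) * (1 + (n : ℝ)) ^ σ := by
  refine ⟨2 * (‖a + Complex.I * x‖ + ‖b + Complex.I * x‖) + 1, by positivity, rfl, ?_⟩
  intro n
  set NA := ‖a + Complex.I*(x:ℂ)‖ with hNA
  set NB := ‖b + Complex.I*(x:ℂ)‖ with hNB
  have hNA0 : 0 ≤ NA := norm_nonneg _
  have hNB0 : 0 ≤ NB := norm_nonneg _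
  have hnn : (0:ℝ) < 1 + n := by positivity
  have hfpos : (0:ℝ) < (n.factorial:ℝ) := by exact_mod_cast Nat.factorial_pos n
  have hnormA : ‖2*(a.re:ℂ) - (a+Complex.I*(x:ℂ))‖ = NA := by
    have hca : (starRingEnd ℂ) a = 2*(a.re:ℂ) - a := by
      rw [eq_sub_iff_add_eq, add_comm ((starRingEnd ℂ) a) a, Complex.add_conj]
      push_cast; ring
    rw [show 2*(a.re:ℂ) - (a+Complex.I*(x:ℂ)) = (starRingEnd ℂ) (a+Complex.I*(x:ℂ)) by
      rw [map_add, map_mul, Complex.conj_I, Complex.conj_ofReal, hca]; ring]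
    exact RCLike.norm_conj _
  have hnormB : ‖2*(b.re:ℂ) - (b+Complex.I*(x:ℂ))‖ = NB := by
    have hcb : (starRingEnd ℂ) b = 2*(b.re:ℂ) - b := by
      rw [eq_sub_iff_add_eq, add_comm ((starRingEnd ℂ) b) b, Complex.add_conj]
      push_cast; ring
    rw [show 2*(b.re:ℂ) - (b+Complex.I*(x:ℂ)) = (starRingEnd ℂ) (b+Complex.I*(x:ℂ)) by
      rw [map_add, map_mul, Complex.conj_I, Complex.conj_ofReal, hcb]; ring]
    exact RCLike.norm_conj _
  rw [cHahn_eq n x a b ha hb]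
  have hterm : ∀ k ∈ range (n+1),
      ‖(-1:ℂ)^k * (n.choose k:ℂ) * poch (a+Complex.I*x) k *
        poch (b+Complex.I*x) k * poch (2*(a.re:ℂ) - (a+Complex.I*x)) (n-k) *
        poch (2*(b.re:ℂ) - (b+Complex.I*x)) (n-k)‖
      ≤ (n.factorial:ℝ) * (n.factorial:ℝ) * ((1:ℝ)+n) ^ (2*(NA+NB)) := by
    intro k hk
    simp only [mem_range] at hk
    have hkn : k ≤ n := by omega
    have b1 : ‖poch (a+Complex.I*(x:ℂ)) k‖ ≤ (k.factorial:ℝ) * ((1:ℝ)+n) ^ NA :=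
      norm_poch_le' _ hkn
    have b2 : ‖poch (b+Complex.I*(x:ℂ)) k‖ ≤ (k.factorial:ℝ) * ((1:ℝ)+n) ^ NB :=
      norm_poch_le' _ hkn
    have b3 : ‖poch (2*(a.re:ℂ) - (a+Complex.I*(x:ℂ))) (n-k)‖
        ≤ ((n-k).factorial:ℝ) * ((1:ℝ)+n) ^ NA := by
      rw [← hnormA]; exact norm_poch_le' _ (by omega)
    have b4 : ‖poch (2*(b.re:ℂ) - (b+Complex.I*(x:ℂ))) (n-k)‖
        ≤ ((n-k).factorial:ℝ) * ((1:ℝ)+n) ^ NB := by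
      rw [← hnormB]; exact norm_poch_le' _ (by omega)
    have hnorm1 : ‖(-1:ℂ)^k * (n.choose k:ℂ) * poch (a+Complex.I*x) k *
        poch (b+Complex.I*x) k * poch (2*(a.re:ℂ) - (a+Complex.I*x)) (n-k) *
        poch (2*(b.re:ℂ) - (b+Complex.I*x)) (n-k)‖
        = (n.choose k:ℝ) * ‖poch (a+Complex.I*(x:ℂ)) k‖ * ‖poch (b+Complex.I*(x:ℂ)) k‖ *
          ‖poch (2*(a.re:ℂ) - (a+Complex.I*(x:ℂ))) (n-k)‖ *
          ‖poch (2*(b.re:ℂ) - (b+Complex.I*(x:ℂ))) (n-k)‖ := by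
      simp [norm_mul, Complex.norm_natCast]
    rw [hnorm1]
    have step : (n.choose k:ℝ) * ‖poch (a+Complex.I*(x:ℂ)) k‖ * ‖poch (b+Complex.I*(x:ℂ)) k‖ *
          ‖poch (2*(a.re:ℂ) - (a+Complex.I*(x:ℂ))) (n-k)‖ *
          ‖poch (2*(b.re:ℂ) - (b+Complex.I*(x:ℂ))) (n-k)‖
        ≤ (n.choose k:ℝ) * ((k.factorial:ℝ) * ((1:ℝ)+n) ^ NA) *
          ((k.factorial:ℝ) * ((1:ℝ)+n) ^ NB) * (((n-k).factorial:ℝ) * ((1:ℝ)+n) ^ NA) *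
          (((n-k).factorial:ℝ) * ((1:ℝ)+n) ^ NB) := by
      gcongr
    refine le_trans step ?_
    have hrpow : ((1:ℝ)+n) ^ NA * ((1:ℝ)+n) ^ NB * ((1:ℝ)+n) ^ NA * ((1:ℝ)+n) ^ NB
        = ((1:ℝ)+n) ^ (2*(NA+NB)) := by
      rw [← Real.rpow_add hnn, ← Real.rpow_add hnn, ← Real.rpow_add hnn]
      congr 1
      ring
    have hfac1 : (n.choose k:ℝ) * (k.factorial:ℝ) * ((n-k).factorial:ℝ) = (n.factorial:ℝ) := by
      exact_mod_cast congrArg (fun t : ℕ => (t:ℝ))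
        (Nat.choose_mul_factorial_mul_factorial hkn)
    have hfac2 : (k.factorial:ℝ) * ((n-k).factorial:ℝ) ≤ (n.factorial:ℝ) := by
      have h1 : 1 ≤ n.choose k := Nat.choose_pos hkn
      have := Nat.choose_mul_factorial_mul_factorial hkn
      have h2 : k.factorial * (n-k).factorial ≤ n.factorial := by
        calc k.factorial * (n-k).factorial ≤ n.choose k * (k.factorial * (n-k).factorial) :=
              Nat.le_mul_of_pos_left _ (by omega)
          _ = n.factorial := by rw [← this]; ring
      exact_mod_cast h2
    calc (n.choose k:ℝ) * ((k.factorial:ℝ) * ((1:ℝ)+n) ^ NA) *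
          ((k.factorial:ℝ) * ((1:ℝ)+n) ^ NB) * (((n-k).factorial:ℝ) * ((1:ℝ)+n) ^ NA) *
          (((n-k).factorial:ℝ) * ((1:ℝ)+n) ^ NB)
        = ((n.choose k:ℝ) * (k.factorial:ℝ) * ((n-k).factorial:ℝ)) *
          ((k.factorial:ℝ) * ((n-k).factorial:ℝ)) *
          (((1:ℝ)+n) ^ NA * ((1:ℝ)+n) ^ NB * ((1:ℝ)+n) ^ NA * ((1:ℝ)+n) ^ NB) := by ring
      _ = (n.factorial:ℝ) * ((k.factorial:ℝ) * ((n-k).factorial:ℝ)) *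
          ((1:ℝ)+n) ^ (2*(NA+NB)) := by rw [hfac1, hrpow]
      _ ≤ (n.factorial:ℝ) * (n.factorial:ℝ) * ((1:ℝ)+n) ^ (2*(NA+NB)) := by
          apply mul_le_mul_of_nonneg_right _ (Real.rpow_nonneg (by positivity) _)
          exact mul_le_mul_of_nonneg_left hfac2 (le_of_lt hfpos)
  calc ‖Complex.I^n / (n.factorial:ℂ) *
      ∑ k ∈ range (n+1), (-1:ℂ)^k * (n.choose k:ℂ) * poch (a+Complex.I*x) k *
        poch (b+Complex.I*x) k * poch (2*(a.re:ℂ) - (a+Complex.I*x)) (n-k) *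
        poch (2*(b.re:ℂ) - (b+Complex.I*x)) (n-k)‖
      = (1/(n.factorial:ℝ)) * ‖∑ k ∈ range (n+1), (-1:ℂ)^k * (n.choose k:ℂ) *
          poch (a+Complex.I*x) k * poch (b+Complex.I*x) k *
          poch (2*(a.re:ℂ) - (a+Complex.I*x)) (n-k) *
          poch (2*(b.re:ℂ) - (b+Complex.I*x)) (n-k)‖ := by
        rw [norm_mul, norm_div, norm_pow, Complex.norm_I, one_pow, Complex.norm_natCast]
    _ ≤ (1/(n.factorial:ℝ)) * ((n+1) * ((n.factorial:ℝ) * (n.factorial:ℝ) *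
          ((1:ℝ)+n) ^ (2*(NA+NB)))) := by
        apply mul_le_mul_of_nonneg_left _ (by positivity)
        refine le_trans (norm_sum_le _ _) ?_
        refine le_trans (Finset.sum_le_sum hterm) ?_
        rw [Finset.sum_const, card_range, nsmul_eq_mul]
        push_cast
        exact le_refl _
    _ = (n.factorial:ℝ) * (((1:ℝ)+n) ^ (2*(NA+NB)) * (1+n)) := by
        field_simp
        ring
    _ = (n.factorial:ℝ) * (1+(n:ℝ)) ^ (2*(NA+NB)+1) := by
        rw [Real.rpow_add hnn, Real.rpow_one]
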